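/- Fix μ0, μ1 > 0 and real numbers d0, d1, and for each sufficiently large k ∈ ℕ let ω_k ∈ (kπ, (k+1)π) be the unique solution in that interval of the characteristic equation (ω² − μ0·μ1·(ω² − d0)·(ω² − d1))·sin ω + (μ0·(ω² − d0) + μ1·(ω² − d1))·ω·cos ω = 0, and let X_k(x) := ω_k·cos(ω_k x) + μ0·(d0 − ω_k²)·sin(ω_k x) be the associated eigenfunction. Define the squared norm N_k := μ0·X_k(0)² + μ1·X_k(1)² + ∫₀¹ X_k(x)² dx. Then lim_{k→∞} N_k/ω_k⁴ = μ0²/2; equivalently, the normalization constants g_k := √N_k satisfy g_k = (μ0/√2)·ω_k²·(1 + o(1)) as k → ∞. -/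

import Mathlib

open Real Set Filter

lemma my_integral (a b w : ℝ) (hw : w ≠ 0) :
    ∫ x in (0:ℝ)..1, (a * Real.cos (w*x) + b * Real.sin (w*x))^2
      = (a^2+b^2)/2 + (a^2-b^2)*(Real.sin w * Real.cos w)/(2*w)
        + a*b*(Real.sin w)^2/w := by
  have hder : ∀ x ∈ Set.uIcc (0:ℝ) 1, HasDerivAt
      (fun x => (a^2+b^2)/2 * x + (a^2-b^2)/(4*w) * Real.sin (2*w*x)
        - a*b/(2*w) * Real.cos (2*w*x))
      ((a * Real.cos (w*x) + b * Real.sin (w*x))^2) x := by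
    intro x _
    have hin : HasDerivAt (fun x : ℝ => 2*w*x) (2*w) x := by
      simpa using (hasDerivAt_id x).const_mul (2*w)
    have hs := ((Real.hasDerivAt_sin (2*w*x)).comp x hin).const_mul ((a^2-b^2)/(4*w))
    have hc := ((Real.hasDerivAt_cos (2*w*x)).comp x hin).const_mul (a*b/(2*w))
    have hl := (hasDerivAt_id x).const_mul ((a^2+b^2)/2)
    have := (hl.add hs).sub hc
    refine this.congr_deriv ?_
    symm
    have h1 : Real.cos (2*(w*x)) = 2 * Real.cos (w*x)^2 - 1 := Real.cos_two_mul _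
    have h2 : Real.sin (2*(w*x)) = 2 * Real.sin (w*x) * Real.cos (w*x) := Real.sin_two_mul _
    have h3 : Real.sin (w*x)^2 + Real.cos (w*x)^2 = 1 := Real.sin_sq_add_cos_sq _
    have e : 2*w*x = 2*(w*x) := by ring
    rw [e, h1, h2]
    field_simp
    linear_combination (8*b^2) * h3
  have hcont : IntervalIntegrable (fun x => (a * Real.cos (w*x) + b * Real.sin (w*x))^2)
      MeasureTheory.volume 0 1 := by
    apply Continuous.intervalIntegrable; fun_prop
  rw [intervalIntegral.integral_eq_sub_of_hasDerivAt hder hcont]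
  simp only [mul_zero, mul_one, Real.sin_zero, Real.cos_zero]
  rw [Real.sin_two_mul, Real.cos_two_mul', Real.cos_sq']
  field_simp
  ring

/-- The squared norms N_k of the eigenfunctions X_k in the
modified scalar product satisfy N_k/ω_k⁴ → μ0²/2, i.e. the normalization
constants g_k = √N_k satisfy g_k ~ (μ0/√2) ω_k². -/
theorem eigenfunction_norm_asymptotics
    (μ0 μ1 d0 d1 : ℝ) (hμ0 : 0 < μ0) (hμ1 : 0 < μ1)
    (G : ℝ → ℝ)
    (hG : ∀ x, G x = (x^2 - μ0*μ1*(x^2 - d0)*(x^2 - d1)) * Real.sin x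
        + (μ0*(x^2 - d0) + μ1*(x^2 - d1)) * x * Real.cos x)
    (ω : ℕ → ℝ) (K₀ : ℕ)
    (hω : ∀ k : ℕ, K₀ ≤ k →
      ω k ∈ Ioo ((k:ℝ)*π) (((k:ℝ)+1)*π) ∧ G (ω k) = 0 ∧
      ∀ ω' ∈ Ioo ((k:ℝ)*π) (((k:ℝ)+1)*π), G ω' = 0 → ω' = ω k)
    (X : ℕ → ℝ → ℝ)
    (hX : ∀ k x, X k x = ω k * Real.cos (ω k * x) + μ0*(d0 - (ω k)^2) * Real.sin (ω k * x))
    (N : ℕ → ℝ)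
    (hN : ∀ k, N k = μ0 * (X k 0)^2 + μ1 * (X k 1)^2 + ∫ x in (0:ℝ)..1, (X k x)^2) :
    Tendsto (fun k => N k / (ω k)^4) atTop (nhds (μ0^2/2)) ∧
    Tendsto (fun k => Real.sqrt (N k) / ((μ0/Real.sqrt 2) * (ω k)^2)) atTop (nhds 1) := by
  have hπ := Real.pi_pos
  have hμμ : (0:ℝ) < μ0 * μ1 := mul_pos hμ0 hμ1
  set u : ℕ → ℝ := fun k => (ω k)⁻¹ with hu_def
  set s : ℕ → ℝ := fun k => Real.sin (ω k) with hs_def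
  set c : ℕ → ℝ := fun k => Real.cos (ω k) with hc_def
  set β : ℕ → ℝ := fun k => μ0*d0*(u k)^2 - μ0 with hβ_def
  -- ω → ∞
  have hωtop : Tendsto ω atTop atTop := by
    apply tendsto_atTop_mono' atTop ?_ (tendsto_natCast_atTop_atTop.atTop_mul_const hπ)
    filter_upwards [eventually_ge_atTop K₀] with k hk
    exact le_of_lt (hω k hk).1.1
  have hwpos : ∀ᶠ k in atTop, 0 < ω k := hωtop.eventually_gt_atTop 0
  have hu0 : Tendsto u atTop (nhds 0) := hωtop.inv_tendsto_atTop
  -- β → -μ0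
  have hβ0 : Tendsto β atTop (nhds (-μ0)) := by
    have := ((hu0.pow 2).const_mul (μ0*d0)).sub_const μ0
    simpa using this
  -- rescaled characteristic-function coefficients
  have hDq : Tendsto (fun k => (u k)^2 - μ0*μ1*(1-d0*(u k)^2)*(1-d1*(u k)^2))
      atTop (nhds (-(μ0*μ1))) := by
    have hcont : ContinuousAt (fun t : ℝ => t^2 - μ0*μ1*(1-d0*t^2)*(1-d1*t^2)) 0 := by
      fun_prop
    have := hcont.tendsto.comp hu0
    simpa [Function.comp_def] using this
  have hPq : Tendsto (fun k => μ0*(1-d0*(u k)^2) + μ1*(1-d1*(u k)^2))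
      atTop (nhds (μ0+μ1)) := by
    have hcont : ContinuousAt (fun t : ℝ => μ0*(1-d0*t^2) + μ1*(1-d1*t^2)) 0 := by
      fun_prop
    have := hcont.tendsto.comp hu0
    simpa [Function.comp_def] using this
  -- quantitative bound on sin ω_k
  have hsin : ∀ᶠ k in atTop, |s k| ≤ (4*(μ0+μ1)/(μ0*μ1)) * |u k| := by
    have e1 : ∀ᶠ k in atTop,
        (u k)^2 - μ0*μ1*(1-d0*(u k)^2)*(1-d1*(u k)^2) < -(μ0*μ1)/2 :=
      hDq.eventually_lt_const (by nlinarith)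
    have e2 : ∀ᶠ k in atTop,
        μ0*(1-d0*(u k)^2) + μ1*(1-d1*(u k)^2) < 2*(μ0+μ1) :=
      hPq.eventually_lt_const (by nlinarith)
    have e3 : ∀ᶠ k in atTop,
        (0:ℝ) < μ0*(1-d0*(u k)^2) + μ1*(1-d1*(u k)^2) :=
      hPq.eventually_const_lt (by nlinarith)
    filter_upwards [e1, e2, e3, hwpos, eventually_ge_atTop K₀] with k h1 h2 h3 hw hk
    have hwne : ω k ≠ 0 := ne_of_gt hw
    have hinv : ω k * (ω k)⁻¹ = 1 := mul_inv_cancel₀ hwne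
    have huw : u k = (ω k)⁻¹ := rfl
    have hw2 : (0:ℝ) < (ω k)^2 := by positivity
    have hw4 : (0:ℝ) < (ω k)^4 := by positivity
    have heqD : (ω k)^2 - μ0*μ1*((ω k)^2-d0)*((ω k)^2-d1)
        = ((u k)^2 - μ0*μ1*(1-d0*(u k)^2)*(1-d1*(u k)^2)) * (ω k)^4 := by
      rw [huw]
      linear_combination (-(ω k*(ω k)⁻¹+1) * ((1+μ0*μ1*(d0+d1))*(ω k)^2
        - μ0*μ1*d0*d1*(((ω k)⁻¹)^2*(ω k)^2+1))) * hinv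
    have heqP : μ0*((ω k)^2-d0) + μ1*((ω k)^2-d1)
        = (μ0*(1-d0*(u k)^2) + μ1*(1-d1*(u k)^2)) * (ω k)^2 := by
      rw [huw]
      linear_combination ((ω k*(ω k)⁻¹+1)*(μ0*d0+μ1*d1)) * hinv
    have hD : (ω k)^2 - μ0*μ1*((ω k)^2-d0)*((ω k)^2-d1) < -(μ0*μ1)/2 * (ω k)^4 := by
      rw [heqD]; exact mul_lt_mul_of_pos_right h1 hw4
    have hP : μ0*((ω k)^2-d0) + μ1*((ω k)^2-d1) < 2*(μ0+μ1) * (ω k)^2 := by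
      rw [heqP]; exact mul_lt_mul_of_pos_right h2 hw2
    have hPpos : 0 < μ0*((ω k)^2-d0) + μ1*((ω k)^2-d1) := by
      rw [heqP]; positivity
    -- the characteristic equation at ω k
    have hGk : ((ω k)^2 - μ0*μ1*((ω k)^2 - d0)*((ω k)^2 - d1)) * s k
        + (μ0*((ω k)^2 - d0) + μ1*((ω k)^2 - d1)) * ω k * c k = 0 := by
      have h0 := (hω k hk).2.1
      rw [hG] at h0
      exact h0
    have h5 : |s k| * |(ω k)^2 - μ0*μ1*((ω k)^2-d0)*((ω k)^2-d1)|
        = (μ0*((ω k)^2-d0) + μ1*((ω k)^2-d1)) * ω k * |c k| := by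
      rw [← abs_mul]
      have heq : s k * ((ω k)^2 - μ0*μ1*((ω k)^2 - d0)*((ω k)^2 - d1))
          = -((μ0*((ω k)^2 - d0) + μ1*((ω k)^2 - d1)) * ω k * c k) := by linarith
      rw [heq, abs_neg, abs_mul,
        abs_of_pos (by positivity : (0:ℝ) < (μ0*((ω k)^2-d0) + μ1*((ω k)^2-d1)) * ω k)]
    have hpos4 : (0:ℝ) < μ0*μ1/2 * (ω k)^4 := by positivity
    have h6 : μ0*μ1/2 * (ω k)^4 ≤ |(ω k)^2 - μ0*μ1*((ω k)^2-d0)*((ω k)^2-d1)| := by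
      rw [abs_of_neg (by linarith)]
      linarith
    have h7 : (μ0*((ω k)^2-d0) + μ1*((ω k)^2-d1)) * ω k * |c k|
        ≤ 2*(μ0+μ1) * (ω k)^3 := by
      have hc1 : |c k| ≤ 1 := Real.abs_cos_le_one _
      calc (μ0*((ω k)^2-d0) + μ1*((ω k)^2-d1)) * ω k * |c k|
          ≤ (μ0*((ω k)^2-d0) + μ1*((ω k)^2-d1)) * ω k :=
            mul_le_of_le_one_right (le_of_lt (mul_pos hPpos hw)) hc1
        _ ≤ (2*(μ0+μ1) * (ω k)^2) * ω k :=
            mul_le_mul_of_nonneg_right (le_of_lt hP) (le_of_lt hw)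
        _ = 2*(μ0+μ1) * (ω k)^3 := by ring
    have habs : |s k| * (μ0*μ1/2 * (ω k)^4) ≤ 2*(μ0+μ1) * (ω k)^3 :=
      calc |s k| * (μ0*μ1/2 * (ω k)^4)
          ≤ |s k| * |(ω k)^2 - μ0*μ1*((ω k)^2-d0)*((ω k)^2-d1)| :=
            mul_le_mul_of_nonneg_left h6 (abs_nonneg _)
        _ = (μ0*((ω k)^2-d0) + μ1*((ω k)^2-d1)) * ω k * |c k| := h5
        _ ≤ 2*(μ0+μ1) * (ω k)^3 := h7
    have hau : |u k| = (ω k)⁻¹ := by rw [huw, abs_of_pos (by positivity)]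
    rw [hau, show (4*(μ0+μ1)/(μ0*μ1)) * (ω k)⁻¹
        = (2*(μ0+μ1)*(ω k)^3) / (μ0*μ1/2*(ω k)^4) by
      rw [eq_div_iff (by positivity)]; field_simp; ring]
    exact (le_div_iff₀ (by positivity)).mpr habs
  -- limits of the building blocks
  have hs0 : Tendsto s atTop (nhds 0) := by
    have hg : Tendsto (fun k => (4*(μ0+μ1)/(μ0*μ1)) * |u k|) atTop (nhds 0) := by
      have := hu0.abs.const_mul (4*(μ0+μ1)/(μ0*μ1))
      simpa using this
    refine squeeze_zero_norm' ?_ hg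
    filter_upwards [hsin] with k h
    simpa [Real.norm_eq_abs] using h
  have hcu : Tendsto (fun k => c k * u k) atTop (nhds 0) := by
    have hg : Tendsto (fun k => |u k|) atTop (nhds 0) := by simpa using hu0.abs
    refine squeeze_zero_norm (fun n => ?_) hg
    rw [Real.norm_eq_abs, abs_mul]
    exact mul_le_of_le_one_left (abs_nonneg _) (Real.abs_cos_le_one _)
  -- the rescaled norm expression and its limit
  have hE : Tendsto (fun k => μ0*(u k)^2 + μ1*(c k * u k + β k * s k)^2
      + ((u k)^2/2 + (β k)^2/2)
      + ((u k)^2 - (β k)^2)*(s k/2)*(c k * u k)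
      + β k*(u k)^2*(s k)^2) atTop (nhds (μ0^2/2)) := by
    have hΦ : Continuous (fun p : ℝ×ℝ×ℝ×ℝ => μ0*p.1^2 + μ1*(p.2.2.1 + p.2.2.2*p.2.1)^2
        + (p.1^2/2 + p.2.2.2^2/2) + (p.1^2 - p.2.2.2^2)*(p.2.1/2)*p.2.2.1
        + p.2.2.2*p.1^2*p.2.1^2) := by fun_prop
    have hp : Tendsto (fun k => (u k, s k, c k * u k, β k)) atTop
        (nhds ((0:ℝ), (0:ℝ), (0:ℝ), -μ0)) :=
      hu0.prodMk_nhds (hs0.prodMk_nhds (hcu.prodMk_nhds hβ0))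
    have key := (hΦ.tendsto ((0:ℝ), (0:ℝ), (0:ℝ), -μ0)).comp hp
    simp only [Function.comp_def] at key
    norm_num at key
    convert key using 2
  -- eventual equality of N/ω⁴ with the rescaled expression
  have heq : (fun k => N k / (ω k)^4) =ᶠ[atTop]
      (fun k => μ0*(u k)^2 + μ1*(c k * u k + β k * s k)^2
      + ((u k)^2/2 + (β k)^2/2)
      + ((u k)^2 - (β k)^2)*(s k/2)*(c k * u k)
      + β k*(u k)^2*(s k)^2) := by
    filter_upwards [hwpos] with k hw
    have hwne : ω k ≠ 0 := ne_of_gt hw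
    have hx0 : X k 0 = ω k := by rw [hX]; simp
    have hx1 : X k 1 = ω k * c k + μ0*(d0 - (ω k)^2) * s k := by
      rw [hX]; simp [hc_def, hs_def]
    have hint : (∫ x in (0:ℝ)..1, (X k x)^2)
        = ((ω k)^2+(μ0*(d0-(ω k)^2))^2)/2
          + ((ω k)^2-(μ0*(d0-(ω k)^2))^2)*(s k * c k)/(2*(ω k))
          + (ω k)*(μ0*(d0-(ω k)^2))*(s k)^2/(ω k) := by
      simp_rw [hX]
      exact my_integral _ _ _ hwne
    rw [hN, hx0, hx1, hint]
    show _ = μ0*((ω k)⁻¹)^2 + μ1*(c k * (ω k)⁻¹ + (μ0*d0*((ω k)⁻¹)^2 - μ0) * s k)^2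
      + (((ω k)⁻¹)^2/2 + (μ0*d0*((ω k)⁻¹)^2 - μ0)^2/2)
      + (((ω k)⁻¹)^2 - (μ0*d0*((ω k)⁻¹)^2 - μ0)^2)*(s k/2)*(c k * (ω k)⁻¹)
      + (μ0*d0*((ω k)⁻¹)^2 - μ0)*((ω k)⁻¹)^2*(s k)^2
    field_simp
    ring
  have h1 : Tendsto (fun k => N k / (ω k)^4) atTop (nhds (μ0^2/2)) :=
    hE.congr' heq.symm
  refine ⟨h1, ?_⟩
  -- second statement
  have hNpos : ∀ᶠ k in atTop, 0 < N k := by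
    have h2 : ∀ᶠ k in atTop, 0 < N k / (ω k)^4 :=
      h1.eventually_const_lt (show (0:ℝ) < μ0^2/2 by positivity)
    filter_upwards [h2, hwpos] with k ha hb
    rcases div_pos_iff.mp ha with h | h
    · exact h.1
    · exact absurd h.2 (not_lt.mpr (by positivity : (0:ℝ) ≤ (ω k)^4))
  have hmu2 : (0:ℝ) < μ0 / Real.sqrt 2 := by positivity
  have heq2 : (fun k => Real.sqrt (N k) / ((μ0/Real.sqrt 2) * (ω k)^2)) =ᶠ[atTop]
      (fun k => Real.sqrt (N k / (ω k)^4) / (μ0/Real.sqrt 2)) := by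
    filter_upwards [hNpos, hwpos] with k hNk hwk
    rw [Real.sqrt_div (le_of_lt hNk), show (ω k)^4 = ((ω k)^2)^2 by ring,
      Real.sqrt_sq (by positivity), div_div, mul_comm ((ω k)^2)]
  have hval : Real.sqrt (μ0^2/2) = μ0 / Real.sqrt 2 := by
    rw [Real.sqrt_div (sq_nonneg μ0), Real.sqrt_sq hμ0.le]
  have h2' := h1.sqrt.div_const (μ0/Real.sqrt 2)
  rw [hval, div_self (ne_of_gt hmu2)] at h2'
  exact h2'.congr' heq2.symm
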